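/- Let q, t ∈ ℂ with 0 < |q| < 1, t ≠ 0 and t ≠ q^m for every m ∈ ℤ. For d ∈ ℤ and n ∈ ℕ define S_{d,n} := Σ_{j=0}^{2n} (t;q)_j (t;q)_{2n−j} (t^{−1};q)_{j+d} t^{j+d} / ((q;q)_j (q;q)_{2n−j} (t;q)_{j+d}), where (t^{−1};q)_{j+d} and (t;q)_{j+d} are ℤ-indexed q-Pochhammer symbols. Then for all d ∈ ℤ and n ∈ ℕ, S_{d,n} = (t²;q)_{2n} (q^{d};q)_{2n} (t^{−1};q)_d t^d / ((q;q)_{2n} (t;q)_{2n+d}), where (q^{d};q)_{2n} = ∏_{i=0}^{2n−1} (1 − q^{d+i}). -/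

import Mathlib

open Finset

/-- Finite q-Pochhammer symbol `(a;q)_n`. -/
noncomputable def qPoch (a q : ℂ) (n : ℕ) : ℂ := ∏ i ∈ Finset.range n, (1 - a * q ^ i)

/-- Infinite q-Pochhammer symbol `(a;q)_∞`. -/
noncomputable def qPochInf (a q : ℂ) : ℂ := ∏' i : ℕ, (1 - a * q ^ i)

/-- ℤ-indexed q-Pochhammer symbol `(a;q)_m := (a;q)_∞ / (a q^m;q)_∞`. -/
noncomputable def qPochZ (a q : ℂ) (m : ℤ) : ℂ := qPochInf a q / qPochInf (a * q ^ m) q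

lemma qPoch_ne_zero {a q : ℂ} (h : ∀ i : ℕ, 1 - a * q ^ i ≠ 0) (n : ℕ) : qPoch a q n ≠ 0 :=
  Finset.prod_ne_zero_iff.2 fun i _ => h i

lemma summable_log_fac (a q : ℂ) (hq1 : ‖q‖ < 1) :
    Summable fun i : ℕ => Complex.log (1 - a * q ^ i) := by
  have h0 : Filter.Tendsto (fun k : ℕ => ‖a‖ * ‖q‖ ^ k)
      Filter.atTop (nhds 0) := by
    simpa using (tendsto_pow_atTop_nhds_zero_of_lt_one (norm_nonneg q) hq1).const_mul
      (‖a‖)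
  obtain ⟨k, hk⟩ := (h0.eventually (gt_mem_nhds (by norm_num : (0:ℝ) < 1/2))).exists
  rw [← summable_nat_add_iff k]
  refine Summable.of_norm_bounded
    (g := fun n => 3/2 * (‖a‖ * ‖q‖ ^ k) * ‖q‖ ^ n)
    (((summable_geometric_of_lt_one (norm_nonneg q) hq1).mul_left _)) ?_
  intro n
  have hzn : ‖(-(a * q ^ (n + k)))‖ ≤ 1/2 := by
    rw [norm_neg, norm_mul, norm_pow]
    calc ‖a‖ * ‖q‖ ^ (n + k)
        = ‖a‖ * ‖q‖ ^ k * ‖q‖ ^ n := by rw [pow_add]; ring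
      _ ≤ 1/2 * 1 := by
          apply mul_le_mul hk.le (pow_le_one₀ (norm_nonneg q) hq1.le)
            (pow_nonneg (norm_nonneg q) n)
          norm_num
      _ = 1/2 := by norm_num
  have hb := Complex.norm_log_one_add_half_le_self (z := -(a * q ^ (n + k)))
    hzn
  have he : (1 : ℂ) + -(a * q ^ (n + k)) = 1 - a * q ^ (n + k) := by ring
  rw [he] at hb
  calc ‖Complex.log (1 - a * q ^ (n + k))‖
      ≤ 3/2 * ‖-(a * q ^ (n + k))‖ := hb
    _ = 3/2 * (‖a‖ * ‖q‖ ^ k) * ‖q‖ ^ n := by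
        rw [norm_neg, norm_mul, norm_pow, pow_add]; ring

lemma multipliable_fac (a q : ℂ) (hq1 : ‖q‖ < 1) (h : ∀ i : ℕ, 1 - a * q ^ i ≠ 0) :
    Multipliable fun i : ℕ => 1 - a * q ^ i :=
  Complex.multipliable_of_summable_log (summable_log_fac a q hq1)

lemma qPochInf_ne_zero {a q : ℂ} (hq1 : ‖q‖ < 1) (h : ∀ i : ℕ, 1 - a * q ^ i ≠ 0) :
    qPochInf a q ≠ 0 := by
  have hco := Complex.cexp_tsum_eq_tprod (f := fun i : ℕ => 1 - a * q ^ i) h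
    (summable_log_fac a q hq1)
  rw [qPochInf, ← hco]
  exact Complex.exp_ne_zero _

lemma qPochInf_shift (a q : ℂ) (hq1 : ‖q‖ < 1) (h : ∀ i : ℕ, 1 - a * q ^ i ≠ 0)
    (n : ℕ) : qPochInf a q = qPoch a q n * qPochInf (a * q ^ n) q := by
  have hfun : (fun i : ℕ => 1 - a * q ^ (i + n)) = (fun i : ℕ => 1 - (a * q ^ n) * q ^ i) := by
    funext i; rw [pow_add]; ring
  have hmul : Multipliable fun i : ℕ => 1 - a * q ^ (i + n) := by
    rw [hfun]
    exact multipliable_fac (a * q ^ n) q hq1 fun i => by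
      have := h (n + i); rw [pow_add] at this
      intro hc; apply this; rw [← hc]; ring_nf
  have hm := Multipliable.prod_mul_tprod_nat_mul' (f := fun i : ℕ => 1 - a * q ^ i) (k := n) hmul
  rw [qPochInf, ← hm]
  congr 1
  rw [qPochInf]
  exact congrArg tprod hfun

lemma qPochZ_shift (a q : ℂ) (d : ℤ) (hq0 : q ≠ 0) (hq1 : ‖q‖ < 1)
    (h : ∀ i : ℕ, 1 - (a * q ^ d) * q ^ i ≠ 0) (j : ℕ) :
    qPochZ a q (d + j) = qPochZ a q d * qPoch (a * q ^ d) q j := by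
  have key : a * q ^ (d + (j:ℤ)) = (a * q ^ d) * q ^ (j:ℕ) := by
    rw [zpow_add₀ hq0, zpow_natCast]; ring
  have hsh := qPochInf_shift (a * q ^ d) q hq1 h j
  have hP : qPoch (a * q ^ d) q j ≠ 0 := qPoch_ne_zero h j
  have hI : qPochInf ((a * q ^ d) * q ^ j) q ≠ 0 := by
    apply qPochInf_ne_zero hq1
    intro i
    have hji := h (j + i); rw [pow_add] at hji
    intro hc; apply hji; rw [← hc]; ring_nf
  rw [qPochZ, qPochZ, key, hsh]
  field_simp

lemma qPoch_zero (a q : ℂ) : qPoch a q 0 = 1 := by simp [qPoch]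
lemma qPoch_succ (a q : ℂ) (n : ℕ) : qPoch a q (n+1) = qPoch a q n * (1 - a * q ^ n) :=
  Finset.prod_range_succ _ _
lemma saal (q t u : ℂ) (hq0 : q ≠ 0) (hq : ∀ i : ℕ, q ^ (i+1) ≠ 1) (ht : t ≠ 0)
    (hv : ∀ i : ℕ, 1 - (t^2*u) * q ^ i ≠ 0) (N : ℕ) :
    ∑ j ∈ range (N+1), qPoch t q j * qPoch t q (N - j) * qPoch u q j * t ^ j /
      (qPoch q q j * qPoch q q (N - j) * qPoch (t^2*u) q j)
    = qPoch (t^2) q N * qPoch (t*u) q N / (qPoch q q N * qPoch (t^2*u) q N) := by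
  have hq1 : ∀ i : ℕ, (1:ℂ) - q * q ^ i ≠ 0 := by
    intro i
    rw [← pow_succ']
    exact sub_ne_zero.2 fun h => hq i h.symm
  have hcq : ∀ n : ℕ, qPoch q q n ≠ 0 := qPoch_ne_zero hq1
  have hcv : ∀ n : ℕ, qPoch (t^2*u) q n ≠ 0 := qPoch_ne_zero hv
  induction N with
  | zero => simp [qPoch]
  | succ N IH =>
    set G : ℕ → ℂ := fun i =>
      -(qPoch t q i * qPoch t q (N+1-i) * qPoch u q i * t^i * q^N * (1 - q^i) *
        (q - (t^2*u) * q^i)) /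
      (qPoch q q i * qPoch q q (N+1-i) * qPoch (t^2*u) q i * q^i) with hG
    have perj : ∀ j ∈ range (N+1),
        qPoch t q j * qPoch t q (N+1-j) * qPoch u q j * t ^ j /
          (qPoch q q j * qPoch q q (N+1-j) * qPoch (t^2*u) q j) *
          ((1 - q^(N+1)) * (1 - (t^2*u) * q^N)) -
        qPoch t q j * qPoch t q (N-j) * qPoch u q j * t ^ j /
          (qPoch q q j * qPoch q q (N-j) * qPoch (t^2*u) q j) *
          ((1 - t^2*q^N) * (1 - (t*u)*q^N)) = G (j+1) - G j := by
      intro j hj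
      have hjN : j ≤ N := by simpa using Nat.lt_succ_iff.1 (mem_range.1 hj)
      have e1 : N + 1 - j = (N - j) + 1 := by omega
      have e2 : N + 1 - (j+1) = N - j := by omega
      have hM : q ^ N = q ^ j * q ^ (N - j) := by
        rw [← pow_add]; congr 1; omega
      have hK : (q:ℂ) ^ j ≠ 0 := pow_ne_zero _ hq0
      have h1 : (1:ℂ) - q * q ^ j ≠ 0 := hq1 j
      have h2 : (1:ℂ) - q * q ^ (N-j) ≠ 0 := hq1 (N-j)
      have h3 : (1:ℂ) - (t^2*u) * q ^ j ≠ 0 := hv j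
      have hdj : qPoch q q j ≠ 0 := hcq j
      have hdn : qPoch q q (N-j) ≠ 0 := hcq (N-j)
      have hfj : qPoch (t^2*u) q j ≠ 0 := hcv j
      have hp2 : (t:ℂ) ^ (j+1) = t^j * t := pow_succ t j
      have hp3 : (q:ℂ) ^ (j+1) = q^j * q := pow_succ q j
      have hp1 : (q:ℂ) ^ (N+1) = q^j * q^(N-j) * q := by rw [pow_succ, hM]
      simp only [hG, e1, e2, qPoch_succ, hp1, hp2, hp3, hM]
      have hd1 : qPoch q q j * (qPoch q q (N - j) * (1 - q * q ^ (N - j))) *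
          qPoch (t ^ 2 * u) q j ≠ 0 := by
        exact mul_ne_zero (mul_ne_zero hdj (mul_ne_zero hdn h2)) hfj
      have hd2 : qPoch q q j * qPoch q q (N - j) * qPoch (t ^ 2 * u) q j ≠ 0 :=
        mul_ne_zero (mul_ne_zero hdj hdn) hfj
      have hd3 : qPoch q q j * (1 - q * q ^ j) * qPoch q q (N - j) *
          (qPoch (t ^ 2 * u) q j * (1 - t ^ 2 * u * q ^ j)) * (q ^ j * q) ≠ 0 := by
        exact mul_ne_zero (mul_ne_zero (mul_ne_zero (mul_ne_zero hdj h1) hdn)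
          (mul_ne_zero hfj h3)) (mul_ne_zero hK hq0)
      have hd4 : qPoch q q j * (qPoch q q (N - j) * (1 - q * q ^ (N - j))) *
          qPoch (t ^ 2 * u) q j * q ^ j ≠ 0 := mul_ne_zero hd1 hK
      rw [div_mul_eq_mul_div, div_mul_eq_mul_div, div_sub_div _ _ hd1 hd2,
        div_sub_div _ _ hd3 hd4, div_eq_div_iff (mul_ne_zero hd1 hd2) (mul_ne_zero hd3 hd4)]
      ring
    have tele : ∑ j ∈ range (N+1),
        (qPoch t q j * qPoch t q (N+1-j) * qPoch u q j * t ^ j /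
          (qPoch q q j * qPoch q q (N+1-j) * qPoch (t^2*u) q j) *
          ((1 - q^(N+1)) * (1 - (t^2*u) * q^N)) -
        qPoch t q j * qPoch t q (N-j) * qPoch u q j * t ^ j /
          (qPoch q q j * qPoch q q (N-j) * qPoch (t^2*u) q j) *
          ((1 - t^2*q^N) * (1 - (t*u)*q^N))) = G (N+1) - G 0 := by
      rw [← Finset.sum_range_sub G (N+1)]
      exact Finset.sum_congr rfl perj
    have hG0 : G 0 = 0 := by
      simp [hG]
    have hGtop : G (N+1) = -(qPoch t q (N+1) * qPoch t q (N+1-(N+1)) * qPoch u q (N+1) *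
        t ^ (N+1) / (qPoch q q (N+1) * qPoch q q (N+1-(N+1)) * qPoch (t^2*u) q (N+1)) *
        ((1 - q^(N+1)) * (1 - (t^2*u) * q^N))) := by
      have hden1 : qPoch q q (N+1) * qPoch q q 0 * qPoch (t^2*u) q (N+1) * q^(N+1) ≠ 0 :=
        mul_ne_zero (mul_ne_zero (mul_ne_zero (hcq (N+1)) (by simp [qPoch_zero]))
          (hcv (N+1))) (pow_ne_zero _ hq0)
      have hden2 : qPoch q q (N+1) * qPoch q q 0 * qPoch (t^2*u) q (N+1) ≠ 0 :=
        mul_ne_zero (mul_ne_zero (hcq (N+1)) (by simp [qPoch_zero])) (hcv (N+1))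
      have hps : (q:ℂ) ^ (N+1) = q ^ N * q := pow_succ q N
      simp only [hG, Nat.sub_self, neg_div, div_mul_eq_mul_div, neg_inj]
      rw [div_eq_div_iff hden1 hden2, hps]
      ring
    have hα : ((1:ℂ) - q^(N+1)) * (1 - (t^2*u) * q^N) ≠ 0 :=
      mul_ne_zero (sub_ne_zero.2 fun h => hq N h.symm) (hv N)
    refine mul_right_cancel₀ hα ?_
    have expand : (∑ j ∈ range (N+1+1),
        qPoch t q j * qPoch t q (N+1-j) * qPoch u q j * t ^ j /
          (qPoch q q j * qPoch q q (N+1-j) * qPoch (t^2*u) q j)) *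
        ((1 - q^(N+1)) * (1 - (t^2*u) * q^N))
        = (G (N+1) - G 0) + (∑ j ∈ range (N+1),
            qPoch t q j * qPoch t q (N-j) * qPoch u q j * t ^ j /
            (qPoch q q j * qPoch q q (N-j) * qPoch (t^2*u) q j)) *
          ((1 - t^2*q^N) * (1 - (t*u)*q^N)) +
          qPoch t q (N+1) * qPoch t q (N+1-(N+1)) * qPoch u q (N+1) * t ^ (N+1) /
            (qPoch q q (N+1) * qPoch q q (N+1-(N+1)) * qPoch (t^2*u) q (N+1)) *
          ((1 - q^(N+1)) * (1 - (t^2*u) * q^N)) := by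
      rw [← tele, Finset.sum_sub_distrib, Finset.sum_range_succ, add_mul,
        Finset.sum_mul, Finset.sum_mul]
      ring
    rw [expand, hG0, hGtop, IH]
    have hps : (q:ℂ) ^ (N+1) = q ^ N * q := pow_succ q N
    have hQ : qPoch q q N * qPoch (t^2*u) q N ≠ 0 := mul_ne_zero (hcq N) (hcv N)
    have hQ' : qPoch q q N * (1 - q * q^N) * (qPoch (t^2*u) q N *
        (1 - (t^2*u) * q^N)) ≠ 0 :=
      mul_ne_zero (mul_ne_zero (hcq N) (hq1 N)) (mul_ne_zero (hcv N) (hv N))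
    simp only [qPoch_succ]
    have hsimp : ∀ x y : ℂ, -x - 0 + y + x = y := fun x y => by ring
    rw [hsimp]
    rw [div_mul_eq_mul_div, div_mul_eq_mul_div, div_eq_div_iff hQ hQ', hps]
    ring

/-- Equation (3.9): the closed-form evaluation of the auxiliary sum `S_{d,n}`,
obtained from the q-Pfaff–Saalschütz summation.  Here `(t⁻¹;q)_{j+d}`,
`(t;q)_{j+d}`, `(t⁻¹;q)_d` and `(t;q)_{2n+d}` are ℤ-indexed q-Pochhammer
symbols, and `(q^d;q)_{2n} = ∏_{i=0}^{2n-1} (1 - q^{d+i})` is a finite product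
with integer exponents. -/
theorem S_evaluation (q t : ℂ)
    (hq0 : 0 < ‖q‖) (hq1 : ‖q‖ < 1)
    (ht0 : t ≠ 0) (htq : ∀ m : ℤ, t ≠ q ^ m) (d : ℤ) (n : ℕ) :
    ∑ j ∈ Finset.range (2 * n + 1),
      qPoch t q j * qPoch t q (2 * n - j) * qPochZ t⁻¹ q ((j : ℤ) + d) * t ^ ((j : ℤ) + d) /
        (qPoch q q j * qPoch q q (2 * n - j) * qPochZ t q ((j : ℤ) + d)) =
      qPoch (t ^ 2) q (2 * n) * (∏ i ∈ Finset.range (2 * n), (1 - q ^ (d + (i : ℤ)))) *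
        qPochZ t⁻¹ q d * t ^ d /
        (qPoch q q (2 * n) * qPochZ t q (2 * (n : ℤ) + d)) := by
  have hqne : q ≠ 0 := by
    intro h; rw [h] at hq0; simp at hq0
  have hq' : ∀ i : ℕ, q ^ (i+1) ≠ 1 := by
    intro i h
    have h1 : ‖q‖ ^ (i+1) < 1 :=
      pow_lt_one₀ (norm_nonneg q) hq1 (Nat.succ_ne_zero i)
    rw [← norm_pow, h, norm_one] at h1
    exact lt_irrefl _ h1
  have hv_fac : ∀ i : ℕ, (1:ℂ) - (t * q ^ d) * q ^ i ≠ 0 := by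
    intro i hc
    apply htq (-(d + i))
    have h1 : t * q ^ (d + (i:ℤ)) = 1 := by
      rw [zpow_add₀ hqne, zpow_natCast]
      linear_combination -hc
    rw [zpow_neg]
    exact eq_inv_of_mul_eq_one_left h1
  have hu_fac : ∀ i : ℕ, (1:ℂ) - (t⁻¹ * q ^ d) * q ^ i ≠ 0 := by
    intro i hc
    apply htq (d + i)
    have h1 : t⁻¹ * q ^ (d + (i:ℤ)) = 1 := by
      rw [zpow_add₀ hqne, zpow_natCast]
      linear_combination -hc
    have h2 := eq_inv_of_mul_eq_one_left h1
    exact inv_injective h2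
  have hveq : t * q ^ d = t^2 * (t⁻¹ * q ^ d) := by
    field_simp
  have hv2 : ∀ i : ℕ, (1:ℂ) - (t^2 * (t⁻¹ * q ^ d)) * q ^ i ≠ 0 := by
    intro i; rw [← hveq]; exact hv_fac i
  have hA : ∀ j : ℕ, qPochZ t⁻¹ q ((j:ℤ) + d) = qPochZ t⁻¹ q d * qPoch (t⁻¹ * q ^ d) q j := by
    intro j; rw [add_comm]; exact qPochZ_shift t⁻¹ q d hqne hq1 hu_fac j
  have hB : ∀ j : ℕ, qPochZ t q ((j:ℤ) + d) = qPochZ t q d * qPoch (t * q ^ d) q j := by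
    intro j; rw [add_comm]; exact qPochZ_shift t q d hqne hq1 hv_fac j
  have hT : ∀ j : ℕ, t ^ ((j:ℤ) + d) = t ^ j * t ^ d := by
    intro j; rw [zpow_add₀ ht0, zpow_natCast]
  have hprod : ∏ i ∈ Finset.range (2*n), ((1:ℂ) - q ^ (d + (i:ℤ)))
      = qPoch (t * (t⁻¹ * q ^ d)) q (2*n) := by
    rw [qPoch]
    apply Finset.prod_congr rfl
    intro i _
    rw [show t * (t⁻¹ * q ^ d) = q ^ d by field_simp]
    rw [zpow_add₀ hqne, zpow_natCast]
  have hB2 : qPochZ t q (2*(n:ℤ) + d) = qPochZ t q d * qPoch (t * q ^ d) q (2*n) := by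
    have he : (2*(n:ℤ) + d) = d + ((2*n : ℕ) : ℤ) := by push_cast; ring
    rw [he]
    exact qPochZ_shift t q d hqne hq1 hv_fac (2*n)
  have hsum : ∑ j ∈ Finset.range (2 * n + 1),
      qPoch t q j * qPoch t q (2 * n - j) * qPochZ t⁻¹ q ((j : ℤ) + d) * t ^ ((j : ℤ) + d) /
        (qPoch q q j * qPoch q q (2 * n - j) * qPochZ t q ((j : ℤ) + d))
      = (∑ j ∈ Finset.range (2*n + 1),
          qPoch t q j * qPoch t q (2*n - j) * qPoch (t⁻¹ * q ^ d) q j * t ^ j /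
            (qPoch q q j * qPoch q q (2*n - j) * qPoch (t^2 * (t⁻¹ * q ^ d)) q j)) *
        (qPochZ t⁻¹ q d * t ^ d / qPochZ t q d) := by
    rw [Finset.sum_mul]
    apply Finset.sum_congr rfl
    intro j hj
    rw [hA j, hB j, hT j, hveq]
    ring
  rw [hsum, saal q t (t⁻¹ * q ^ d) hqne hq' ht0 hv2 (2*n), hprod, hB2, hveq]
  ring
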